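/- Let E = {0} ∪ ⋃_{k=1}^∞ [2^{−2k+1}, 2^{−2k+2}] and F = {0} ∪ ⋃_{k=1}^∞ [2^{−4k+2}, 2^{−4k+3}], both subsets of ℝ. Then: (1) [0,1/2] = F ∪ (1/2)·F ∪ (1/4)·F ∪ (1/8)·F; (2) F = (1/16)·F ∪ [1/4,1/2]; (3) F = (1/16)·F ∪ (((1/2)·F ∪ (1/4)·F ∪ (1/8)·F ∪ (1/16)·F) + 1/4); (4) [0,1] = E ∪ F ∪ (1/4)·F. -/
import Mathlib

open Pointwise

/-- `E = {0} ∪ ⋃_{k≥1} [2^{-2k+1}, 2^{-2k+2}] ⊆ ℝ`. -/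
def setE : Set ℝ :=
  insert 0 (⋃ k : ℕ, Set.Icc ((2 : ℝ) ^ (-2 * ((k : ℤ) + 1) + 1)) ((2 : ℝ) ^ (-2 * ((k : ℤ) + 1) + 2)))

/-- `F = {0} ∪ ⋃_{k≥1} [2^{-4k+2}, 2^{-4k+3}] ⊆ ℝ`. -/
def setF : Set ℝ :=
  insert 0 (⋃ k : ℕ, Set.Icc ((2 : ℝ) ^ (-4 * ((k : ℤ) + 1) + 2)) ((2 : ℝ) ^ (-4 * ((k : ℤ) + 1) + 3)))

lemma memF_iff {x : ℝ} :
    x ∈ setF ↔ x = 0 ∨ ∃ k : ℕ, (2:ℝ) ^ (-4 * (k:ℤ) - 2) ≤ x ∧ x ≤ (2:ℝ) ^ (-4 * (k:ℤ) - 1) := by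
  unfold setF
  simp only [Set.mem_insert_iff, Set.mem_iUnion, Set.mem_Icc]
  refine or_congr Iff.rfl (exists_congr fun k => ?_)
  have h1 : -4 * ((k:ℤ) + 1) + 2 = -4 * (k:ℤ) - 2 := by ring
  have h2 : -4 * ((k:ℤ) + 1) + 3 = -4 * (k:ℤ) - 1 := by ring
  rw [h1, h2]

lemma memE_iff {x : ℝ} :
    x ∈ setE ↔ x = 0 ∨ ∃ k : ℕ, (2:ℝ) ^ (-2 * (k:ℤ) - 1) ≤ x ∧ x ≤ (2:ℝ) ^ (-2 * (k:ℤ)) := by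
  unfold setE
  simp only [Set.mem_insert_iff, Set.mem_iUnion, Set.mem_Icc]
  refine or_congr Iff.rfl (exists_congr fun k => ?_)
  have h1 : -2 * ((k:ℤ) + 1) + 1 = -2 * (k:ℤ) - 1 := by ring
  have h2 : -2 * ((k:ℤ) + 1) + 2 = -2 * (k:ℤ) := by ring
  rw [h1, h2]

lemma mem_smulF {j : ℤ} {x : ℝ} :
    x ∈ ((2:ℝ) ^ j) • setF ↔
      x = 0 ∨ ∃ k : ℕ, (2:ℝ) ^ (j - 4 * (k:ℤ) - 2) ≤ x ∧ x ≤ (2:ℝ) ^ (j - 4 * (k:ℤ) - 1) := by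
  have h2 : (0:ℝ) < 2 := by norm_num
  have hj : (0:ℝ) < (2:ℝ) ^ j := zpow_pos h2 j
  constructor
  · rintro ⟨y, hy, rfl⟩
    beta_reduce
    rw [smul_eq_mul]
    rcases memF_iff.mp hy with rfl | ⟨k, hk1, hk2⟩
    · left; ring
    · right
      refine ⟨k, ?_, ?_⟩
      · calc (2:ℝ) ^ (j - 4 * (k:ℤ) - 2) = (2:ℝ) ^ j * (2:ℝ) ^ (-4 * (k:ℤ) - 2) := by
              rw [← zpow_add₀ (by norm_num : (2:ℝ) ≠ 0)]; ring_nf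
          _ ≤ (2:ℝ) ^ j * y := by nlinarith
      · calc (2:ℝ) ^ j * y ≤ (2:ℝ) ^ j * (2:ℝ) ^ (-4 * (k:ℤ) - 1) := by nlinarith
          _ = (2:ℝ) ^ (j - 4 * (k:ℤ) - 1) := by
              rw [← zpow_add₀ (by norm_num : (2:ℝ) ≠ 0)]; ring_nf
  · rintro (rfl | ⟨k, hk1, hk2⟩)
    · exact ⟨0, memF_iff.mpr (Or.inl rfl), by simp⟩
    · refine ⟨(2:ℝ) ^ (-j) * x, memF_iff.mpr (Or.inr ⟨k, ?_, ?_⟩), ?_⟩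
      · calc (2:ℝ) ^ (-4 * (k:ℤ) - 2) = (2:ℝ) ^ (-j) * (2:ℝ) ^ (j - 4 * (k:ℤ) - 2) := by
              rw [← zpow_add₀ (by norm_num : (2:ℝ) ≠ 0)]; ring_nf
          _ ≤ (2:ℝ) ^ (-j) * x := by
              have := zpow_pos h2 (-j); nlinarith
      · calc (2:ℝ) ^ (-j) * x ≤ (2:ℝ) ^ (-j) * (2:ℝ) ^ (j - 4 * (k:ℤ) - 1) := by
              have := zpow_pos h2 (-j); nlinarith
          _ = (2:ℝ) ^ (-4 * (k:ℤ) - 1) := by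
              rw [← zpow_add₀ (by norm_num : (2:ℝ) ≠ 0)]; ring_nf
      · beta_reduce
        rw [smul_eq_mul, ← mul_assoc, ← zpow_add₀ (by norm_num : (2:ℝ) ≠ 0)]
        simp

lemma coefF (c : ℝ) (j : ℤ) (h : c = (2:ℝ) ^ j) : c • setF = ((2:ℝ) ^ j) • setF := by rw [h]

lemma exists_n {x : ℝ} (hx : 0 < x) (hx1 : x ≤ 1) :
    ∃ n : ℕ, (2:ℝ) ^ (-(n:ℤ) - 1) ≤ x ∧ x ≤ (2:ℝ) ^ (-(n:ℤ)) := by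
  set L := Int.log 2 x with hL
  have hlow : (2:ℝ) ^ L ≤ x := by
    have := Int.zpow_log_le_self (b := 2) (by norm_num) hx
    simpa using this
  have hhigh : x < (2:ℝ) ^ (L + 1) := by
    have := Int.lt_zpow_succ_log_self (b := 2) (by norm_num) x
    simpa using this
  have hL0 : L ≤ 0 := by
    by_contra h
    push_neg at h
    have : (2:ℝ) ^ (1:ℤ) ≤ (2:ℝ) ^ L := zpow_le_zpow_right₀ (by norm_num) h
    simp at this
    linarith
  rcases eq_or_lt_of_le hL0 with hL0' | hL0'
  · refine ⟨0, ?_, ?_⟩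
    · have h1' : (1:ℝ) ≤ x := by rw [hL0'] at hlow; simpa using hlow
      have h2' : (2:ℝ) ^ (-((0:ℕ):ℤ) - 1) ≤ 1 := by norm_num
      linarith
    · have e : (-((0:ℕ):ℤ)) = (0:ℤ) := by simp
      rw [e, zpow_zero]; exact hx1
  · refine ⟨(-(L+1)).toNat, ?_, ?_⟩
    · have : (-((-(L+1)).toNat : ℤ) - 1) = L := by omega
      rw [this]; exact hlow
    · have : (-((-(L+1)).toNat : ℤ)) = L + 1 := by omega
      rw [this]; exact hhigh.le

lemma smulF_subset {j : ℤ} (hj : j ≤ 0) :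
    ((2:ℝ) ^ j) • setF ⊆ Set.Icc 0 ((2:ℝ) ^ (j - 1)) := by
  intro x hx
  rcases mem_smulF.mp hx with rfl | ⟨k, hk1, hk2⟩
  · exact ⟨le_refl 0, zpow_nonneg (by norm_num) _⟩
  · have h1 : (0:ℝ) < (2:ℝ) ^ (j - 4 * (k:ℤ) - 2) := zpow_pos (by norm_num) _
    have h2 : (2:ℝ) ^ (j - 4 * (k:ℤ) - 1) ≤ (2:ℝ) ^ (j - 1) :=
      zpow_le_zpow_right₀ (by norm_num) (by omega)
    exact ⟨by linarith, by linarith⟩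

theorem setF_decompositions :
    Set.Icc (0 : ℝ) (1 / 2)
        = setF ∪ (2 : ℝ)⁻¹ • setF ∪ (4 : ℝ)⁻¹ • setF ∪ (8 : ℝ)⁻¹ • setF
    ∧ setF = (16 : ℝ)⁻¹ • setF ∪ Set.Icc (1 / 4 : ℝ) (1 / 2)
    ∧ setF = (16 : ℝ)⁻¹ • setF ∪ (fun x : ℝ => x + 1 / 4) ''
        ((2 : ℝ)⁻¹ • setF ∪ (4 : ℝ)⁻¹ • setF ∪ (8 : ℝ)⁻¹ • setF ∪ (16 : ℝ)⁻¹ • setF)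
    ∧ Set.Icc (0 : ℝ) 1 = setE ∪ setF ∪ (4 : ℝ)⁻¹ • setF := by
  have e2 : (2:ℝ)⁻¹ • setF = ((2:ℝ) ^ (-1:ℤ)) • setF := coefF _ _ (by norm_num)
  have e4 : (4:ℝ)⁻¹ • setF = ((2:ℝ) ^ (-2:ℤ)) • setF := coefF _ _ (by norm_num)
  have e8 : (8:ℝ)⁻¹ • setF = ((2:ℝ) ^ (-3:ℤ)) • setF := coefF _ _ (by norm_num)
  have e16 : (16:ℝ)⁻¹ • setF = ((2:ℝ) ^ (-4:ℤ)) • setF := coefF _ _ (by norm_num)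
  have eF : setF = ((2:ℝ) ^ (0:ℤ)) • setF := by rw [zpow_zero, one_smul]
  -- part 1
  have h1 : Set.Icc (0 : ℝ) (1 / 2)
      = setF ∪ (2 : ℝ)⁻¹ • setF ∪ (4 : ℝ)⁻¹ • setF ∪ (8 : ℝ)⁻¹ • setF := by
    apply Set.Subset.antisymm
    · rintro x ⟨hx0, hx12⟩
      rcases eq_or_lt_of_le hx0 with rfl | hx0'
      · exact Or.inl (Or.inl (Or.inl (memF_iff.mpr (Or.inl rfl))))
      · -- get n with 2^(-n-2) ≤ x ≤ 2^(-n-1)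
        obtain ⟨n, hn1, hn2⟩ := exists_n (by linarith : (0:ℝ) < 2 * x) (by linarith)
        have hb1 : (2:ℝ) ^ (-(n:ℤ) - 2) ≤ x := by
          have : (2:ℝ) ^ (-(n:ℤ) - 1) = 2 * (2:ℝ) ^ (-(n:ℤ) - 2) := by
            rw [show (-(n:ℤ) - 1) = 1 + (-(n:ℤ) - 2) by ring, zpow_add₀ (by norm_num : (2:ℝ) ≠ 0)]
            norm_num
          nlinarith
        have hb2 : x ≤ (2:ℝ) ^ (-(n:ℤ) - 1) := by
          have : (2:ℝ) ^ (-(n:ℤ)) = 2 * (2:ℝ) ^ (-(n:ℤ) - 1) := by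
            rw [show (-(n:ℤ)) = 1 + (-(n:ℤ) - 1) by ring, zpow_add₀ (by norm_num : (2:ℝ) ≠ 0)]
            norm_num
          nlinarith
        have hr : n % 4 = 0 ∨ n % 4 = 1 ∨ n % 4 = 2 ∨ n % 4 = 3 := by omega
        have hnd : n = 4 * (n / 4) + n % 4 := by omega
        set k := n / 4 with hk
        rcases hr with hr | hr | hr | hr
        · refine Or.inl (Or.inl (Or.inl (memF_iff.mpr (Or.inr ⟨k, ?_, ?_⟩))))
          · rwa [show -4 * (k:ℤ) - 2 = -(n:ℤ) - 2 by omega]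
          · rwa [show -4 * (k:ℤ) - 1 = -(n:ℤ) - 1 by omega]
        · refine Or.inl (Or.inl (Or.inr ?_))
          rw [e2]
          refine mem_smulF.mpr (Or.inr ⟨k, ?_, ?_⟩)
          · rwa [show (-1:ℤ) - 4 * (k:ℤ) - 2 = -(n:ℤ) - 2 by omega]
          · rwa [show (-1:ℤ) - 4 * (k:ℤ) - 1 = -(n:ℤ) - 1 by omega]
        · refine Or.inl (Or.inr ?_)
          rw [e4]
          refine mem_smulF.mpr (Or.inr ⟨k, ?_, ?_⟩)
          · rwa [show (-2:ℤ) - 4 * (k:ℤ) - 2 = -(n:ℤ) - 2 by omega]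
          · rwa [show (-2:ℤ) - 4 * (k:ℤ) - 1 = -(n:ℤ) - 1 by omega]
        · refine Or.inr ?_
          rw [e8]
          refine mem_smulF.mpr (Or.inr ⟨k, ?_, ?_⟩)
          · rwa [show (-3:ℤ) - 4 * (k:ℤ) - 2 = -(n:ℤ) - 2 by omega]
          · rwa [show (-3:ℤ) - 4 * (k:ℤ) - 1 = -(n:ℤ) - 1 by omega]
    · rintro x (((hx | hx) | hx) | hx)
      · rw [eF] at hx
        have := smulF_subset (le_refl 0) hx
        simpa using this
      · rw [e2] at hx
        have := smulF_subset (by norm_num : (-1:ℤ) ≤ 0) hx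
        rcases this with ⟨ha, hb⟩
        refine ⟨ha, le_trans hb ?_⟩
        norm_num
      · rw [e4] at hx
        have := smulF_subset (by norm_num : (-2:ℤ) ≤ 0) hx
        rcases this with ⟨ha, hb⟩
        refine ⟨ha, le_trans hb ?_⟩
        norm_num
      · rw [e8] at hx
        have := smulF_subset (by norm_num : (-3:ℤ) ≤ 0) hx
        rcases this with ⟨ha, hb⟩
        refine ⟨ha, le_trans hb ?_⟩
        norm_num
  -- part 2
  have h2 : setF = (16 : ℝ)⁻¹ • setF ∪ Set.Icc (1 / 4 : ℝ) (1 / 2) := by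
    apply Set.Subset.antisymm
    · intro x hx
      rcases memF_iff.mp hx with rfl | ⟨k, hk1, hk2⟩
      · exact Or.inl (by rw [e16]; exact mem_smulF.mpr (Or.inl rfl))
      · rcases Nat.eq_zero_or_pos k with rfl | hk
        · refine Or.inr ⟨?_, ?_⟩
          · refine le_trans ?_ hk1; norm_num
          · refine le_trans hk2 ?_; norm_num
        · refine Or.inl ?_
          rw [e16]
          refine mem_smulF.mpr (Or.inr ⟨k - 1, ?_, ?_⟩)
          · rwa [show (-4:ℤ) - 4 * ((k-1:ℕ):ℤ) - 2 = -4 * (k:ℤ) - 2 by push_cast; omega]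
          · rwa [show (-4:ℤ) - 4 * ((k-1:ℕ):ℤ) - 1 = -4 * (k:ℤ) - 1 by push_cast; omega]
    · rintro x (hx | ⟨ha, hb⟩)
      · rw [e16] at hx
        rcases mem_smulF.mp hx with rfl | ⟨k, hk1, hk2⟩
        · exact memF_iff.mpr (Or.inl rfl)
        · refine memF_iff.mpr (Or.inr ⟨k + 1, ?_, ?_⟩)
          · rwa [show -4 * ((k+1:ℕ):ℤ) - 2 = (-4:ℤ) - 4 * (k:ℤ) - 2 by push_cast; ring]
          · rwa [show -4 * ((k+1:ℕ):ℤ) - 1 = (-4:ℤ) - 4 * (k:ℤ) - 1 by push_cast; ring]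
      · refine memF_iff.mpr (Or.inr ⟨0, ?_, ?_⟩)
        · refine le_trans ?_ ha; norm_num
        · refine le_trans hb ?_; norm_num
  refine ⟨h1, h2, ?_, ?_⟩
  -- part 3
  · have key : (2 : ℝ)⁻¹ • setF ∪ (4 : ℝ)⁻¹ • setF ∪ (8 : ℝ)⁻¹ • setF ∪ (16 : ℝ)⁻¹ • setF
        = Set.Icc (0:ℝ) (1/4) := by
      have := congrArg (fun s => (2:ℝ)⁻¹ • s) h1
      simp only [Set.smul_set_union] at this
      rw [LinearOrderedField.smul_Icc (by norm_num : (0:ℝ) < 2⁻¹)] at this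
      have c1 : (2:ℝ)⁻¹ • ((2:ℝ)⁻¹ • setF) = (4:ℝ)⁻¹ • setF := by
        rw [smul_smul]; norm_num
      have c2 : (2:ℝ)⁻¹ • ((4:ℝ)⁻¹ • setF) = (8:ℝ)⁻¹ • setF := by
        rw [smul_smul]; norm_num
      have c3 : (2:ℝ)⁻¹ • ((8:ℝ)⁻¹ • setF) = (16:ℝ)⁻¹ • setF := by
        rw [smul_smul]; norm_num
      rw [c1, c2, c3] at this
      rw [← this]
      norm_num
    rw [key, Set.image_add_const_Icc,
      show (0:ℝ) + 1/4 = 1/4 by norm_num, show (1:ℝ)/4 + 1/4 = 1/2 by norm_num]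
    exact h2
  -- part 4
  · apply Set.Subset.antisymm
    · rintro x ⟨hx0, hx1⟩
      rcases eq_or_lt_of_le hx0 with rfl | hx0'
      · exact Or.inl (Or.inr (memF_iff.mpr (Or.inl rfl)))
      · obtain ⟨n, hn1, hn2⟩ := exists_n hx0' hx1
        have hr : n % 4 = 0 ∨ n % 4 = 1 ∨ n % 4 = 2 ∨ n % 4 = 3 := by omega
        rcases hr with hr | hr | hr | hr
        · -- n even: E with k = n/2
          refine Or.inl (Or.inl (memE_iff.mpr (Or.inr ⟨n / 2, ?_, ?_⟩)))
          · rwa [show -2 * ((n/2:ℕ):ℤ) - 1 = -(n:ℤ) - 1 by omega]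
          · rwa [show -2 * ((n/2:ℕ):ℤ) = -(n:ℤ) by omega]
        · -- n ≡ 1 mod 4: F with k = n/4
          refine Or.inl (Or.inr (memF_iff.mpr (Or.inr ⟨n / 4, ?_, ?_⟩)))
          · rwa [show -4 * ((n/4:ℕ):ℤ) - 2 = -(n:ℤ) - 1 by omega]
          · rwa [show -4 * ((n/4:ℕ):ℤ) - 1 = -(n:ℤ) by omega]
        · refine Or.inl (Or.inl (memE_iff.mpr (Or.inr ⟨n / 2, ?_, ?_⟩)))
          · rwa [show -2 * ((n/2:ℕ):ℤ) - 1 = -(n:ℤ) - 1 by omega]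
          · rwa [show -2 * ((n/2:ℕ):ℤ) = -(n:ℤ) by omega]
        · -- n ≡ 3 mod 4: F/4 with k = n/4
          refine Or.inr ?_
          rw [e4]
          refine mem_smulF.mpr (Or.inr ⟨n / 4, ?_, ?_⟩)
          · rwa [show (-2:ℤ) - 4 * ((n/4:ℕ):ℤ) - 2 = -(n:ℤ) - 1 by omega]
          · rwa [show (-2:ℤ) - 4 * ((n/4:ℕ):ℤ) - 1 = -(n:ℤ) by omega]
    · rintro x ((hx | hx) | hx)
      · rcases memE_iff.mp hx with rfl | ⟨k, hk1, hk2⟩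
        · exact ⟨le_refl 0, by norm_num⟩
        · have h1' : (0:ℝ) < (2:ℝ) ^ (-2 * (k:ℤ) - 1) := zpow_pos (by norm_num) _
          have h2' : (2:ℝ) ^ (-2 * (k:ℤ)) ≤ (2:ℝ) ^ (0:ℤ) :=
            zpow_le_zpow_right₀ (by norm_num) (by omega)
          rw [zpow_zero] at h2'
          exact ⟨by linarith, by linarith⟩
      · rw [eF] at hx
        have := smulF_subset (le_refl 0) hx
        rcases this with ⟨ha, hb⟩
        refine ⟨ha, le_trans hb ?_⟩
        norm_num
      · rw [e4] at hx
        have := smulF_subset (by norm_num : (-2:ℤ) ≤ 0) hx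
        rcases this with ⟨ha, hb⟩
        refine ⟨ha, le_trans hb ?_⟩
        norm_num
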